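/- Let P ⊆ ℝ^d be a full-dimensional polytope and let ε > 0. Then both sums below converge absolutely and the Poisson summation identity holds: Σ_{m∈ℤ^d} (1_P ∗ G_ε)(m) = Σ_{ξ∈ℤ^d} 𝓕1_P(ξ) e^{−πε‖ξ‖²}, where the left-hand side is real and the right-hand side is a sum of complex numbers equal to it. -/

import Mathlib

open MeasureTheory Metric Filter Pointwise

noncomputable section

/-- The point of `ℝ^d` with integer coordinates `m`. -/
def latticePt (d : ℕ) (m : Fin d → ℤ) : EuclideanSpace ℝ (Fin d) :=
  (EuclideanSpace.equiv (Fin d) ℝ).symm (fun i => (m i : ℝ))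

/-- The heat kernel `G_ε(x) = ε^{−d/2} e^{−π‖x‖²/ε}`. -/
def heatKer (d : ℕ) (ε : ℝ) (x : EuclideanSpace ℝ (Fin d)) : ℝ :=
  ε ^ (-(d : ℝ) / 2) * Real.exp (-Real.pi * ‖x‖ ^ 2 / ε)

/-- The Fourier transform of the indicator of `P`: `𝓕1_P(ξ) = ∫_P e^{−2πi⟨ξ,x⟩} dx`. -/
def fourierInd (d : ℕ) (P : Set (EuclideanSpace ℝ (Fin d)))
    (ξ : EuclideanSpace ℝ (Fin d)) : ℂ :=
  ∫ x in P, Complex.exp ((-2 * (Real.pi : ℂ) * Complex.I) * ((inner ℝ ξ x : ℝ) : ℂ))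

section Helpers

open Complex Real

lemma pi_summable_norm {R : Type*} [NormedCommRing R] {d : ℕ}
    (g : Fin d → ℤ → R) (h : ∀ i, Summable fun n => ‖g i n‖) :
    Summable (fun m : Fin d → ℤ => ‖∏ i, g i (m i)‖) := by
  induction d with
  | zero =>
      exact Summable.of_finite
  | succ d ih =>
      have key : Summable fun p : ℤ × (Fin d → ℤ) =>
          ‖g 0 p.1 * ∏ i : Fin d, g i.succ (p.2 i)‖ :=
        Summable.mul_norm (f := g 0) (g := fun m : Fin d → ℤ => ∏ i : Fin d, g i.succ (m i))
          (h 0) (ih (fun i => g i.succ) (fun i => h i.succ))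
      have := key.comp_injective (Fin.consEquiv (fun _ : Fin (d+1) => ℤ)).symm.injective
      refine this.congr fun m => ?_
      simp only [Function.comp]
      congr 1
      rw [Fin.prod_univ_succ]
      simp [Fin.consEquiv, Fin.tail]

lemma pi_tsum {R : Type*} [NormedCommRing R] [CompleteSpace R] {d : ℕ}
    (g : Fin d → ℤ → R) (h : ∀ i, Summable fun n => ‖g i n‖) :
    ∑' m : Fin d → ℤ, ∏ i, g i (m i) = ∏ i, ∑' n, g i n := by
  induction d with
  | zero => simp
  | succ d ih =>
      rw [← (Fin.consEquiv (fun _ : Fin (d+1) => ℤ)).tsum_eq]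
      have : ∀ p : ℤ × (Fin d → ℤ),
          (∏ i, g i ((Fin.consEquiv (fun _ : Fin (d+1) => ℤ)) p i)) =
            g 0 p.1 * ∏ i : Fin d, g i.succ (p.2 i) := by
        intro p
        rw [Fin.prod_univ_succ]
        simp [Fin.consEquiv]
      rw [tsum_congr this, ← tsum_mul_tsum_of_summable_norm (h 0)
        (pi_summable_norm (fun i => g i.succ) (fun i => h i.succ)),
        ih (fun i => g i.succ) (fun i => h i.succ), Fin.prod_univ_succ]

lemma summable_gauss_int (a b : ℝ) (ha : 0 < a) :
    Summable fun n : ℤ => rexp (-a * n ^ 2 + b * n) := by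
  have hτ : 0 < Complex.im ((a / π) * Complex.I) := by
    simp [div_pos ha Real.pi_pos]
  have hs := (summable_jacobiTheta₂_term_iff ((-b / (2 * π)) * Complex.I)
    ((a / π) * Complex.I)).mpr hτ
  rw [← Complex.summable_ofReal]
  refine hs.congr fun n => ?_
  rw [jacobiTheta₂_term, Complex.ofReal_exp]
  congr 1
  have hπ : (π : ℂ) ≠ 0 := Complex.ofReal_ne_zero.mpr Real.pi_ne_zero
  push_cast
  field_simp
  ring_nf
  rw [Complex.I_sq]
  ring

lemma poisson_one_dim {ε : ℝ} (hε : 0 < ε) (t : ℝ) :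
    ((∑' n : ℤ, ε ^ (-(1:ℝ)/2) * rexp (-π * ((n : ℝ) - t) ^ 2 / ε) : ℝ) : ℂ) =
      ∑' n : ℤ, cexp (-(π:ℂ) * ε * (n:ℂ) ^ 2 - 2 * π * Complex.I * n * t) := by
  have key := Complex.tsum_exp_neg_quadratic (a := (ε : ℂ))
    (by simpa using hε) (-Complex.I * t)
  have hL : ∀ n : ℤ, cexp (-(π:ℂ) * ε * (n:ℂ) ^ 2 + 2 * π * (-Complex.I * t) * n)
      = cexp (-(π:ℂ) * ε * (n:ℂ) ^ 2 - 2 * π * Complex.I * n * t) := by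
    intro n; congr 1; ring
  have hR : ∀ n : ℤ, cexp (-(π:ℂ) / ε * ((n:ℂ) + Complex.I * (-Complex.I * t)) ^ 2)
      = cexp (-(π:ℂ) * ((n:ℂ) + t) ^ 2 / ε) := by
    intro n; congr 1
    have : Complex.I * (-Complex.I * t) = (t : ℂ) := by
      rw [← mul_assoc, mul_neg, Complex.I_mul_I]; ring
    rw [this]; ring
  rw [tsum_congr hL, tsum_congr hR] at key
  rw [key]
  rw [Complex.ofReal_tsum]
  rw [← (Equiv.neg ℤ).tsum_eq (fun n : ℤ => cexp (-(π:ℂ) * ((n:ℂ) + t) ^ 2 / ε)), ← tsum_mul_left]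
  refine tsum_congr fun n => ?_
  have hc : ((ε ^ (-(1:ℝ)/2) : ℝ) : ℂ) = 1 / (ε : ℂ) ^ ((1:ℂ)/2) := by
    rw [Complex.ofReal_cpow hε.le]
    rw [show ((-(1:ℝ)/2 : ℝ) : ℂ) = -((1:ℂ)/2) by norm_num]
    rw [Complex.cpow_neg, one_div]
    norm_num
  push_cast
  rw [hc]
  congr 2
  simp only [Equiv.neg_apply, Int.cast_neg]
  push_cast
  ring

lemma summable_g {ε : ℝ} (hε : 0 < ε) (t : ℝ) :
    Summable fun n : ℤ => ε ^ (-(1:ℝ)/2) * rexp (-π * ((n : ℝ) - t) ^ 2 / ε) := by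
  refine Summable.mul_left _ ?_
  have h := (summable_gauss_int (π / ε) (2 * π * t / ε) (div_pos Real.pi_pos hε)).mul_left
    (rexp (-π * t ^ 2 / ε))
  refine h.congr fun n => ?_
  rw [← Real.exp_add]
  congr 1
  field_simp
  ring

lemma norm_cexp_term (ε t : ℝ) (n : ℤ) :
    ‖cexp (-(π:ℂ) * ε * (n:ℂ) ^ 2 - 2 * π * Complex.I * n * t)‖ = rexp (-π * ε * (n:ℝ) ^ 2) := by
  have h : (-(π:ℂ) * ε * (n:ℂ) ^ 2 - 2 * π * Complex.I * n * t) =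
      Complex.ofReal (-π * ε * (n:ℝ) ^ 2) + ((-2 * π * n * t : ℝ) : ℂ) * Complex.I := by
    push_cast; ring
  rw [h, Complex.norm_exp]
  simp only [Complex.add_re, Complex.ofReal_re, Complex.mul_re, Complex.I_re, Complex.I_im,
    Complex.ofReal_im]
  ring_nf

lemma summable_norm_cexp_term {ε : ℝ} (hε : 0 < ε) (t : ℝ) :
    Summable fun n : ℤ => ‖cexp (-(π:ℂ) * ε * (n:ℂ) ^ 2 - 2 * π * Complex.I * n * t)‖ := by
  simp only [norm_cexp_term]
  refine (summable_gauss_int (π * ε) 0 (mul_pos Real.pi_pos hε)).congr fun n => ?_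
  congr 1
  ring

lemma summable_exp_sq {ε : ℝ} (hε : 0 < ε) :
    Summable fun n : ℤ => rexp (-π * ε * (n:ℝ) ^ 2) := by
  refine (summable_gauss_int (π * ε) 0 (mul_pos Real.pi_pos hε)).congr fun n => ?_
  congr 1
  ring

end Helpers

section MainHelpers

open Complex Real

lemma latticePt_sub_apply (d : ℕ) (m : Fin d → ℤ) (y : EuclideanSpace ℝ (Fin d)) (i : Fin d) :
    (latticePt d m - y) i = (m i : ℝ) - y i := rfl

lemma latticePt_apply (d : ℕ) (m : Fin d → ℤ) (i : Fin d) :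
    latticePt d m i = (m i : ℝ) := rfl

lemma norm_sq_eq (d : ℕ) (x : EuclideanSpace ℝ (Fin d)) :
    ‖x‖ ^ 2 = ∑ i, x i ^ 2 := by
  rw [EuclideanSpace.norm_eq, Real.sq_sqrt]
  · simp
  · positivity

lemma inner_latticePt (d : ℕ) (ξ : Fin d → ℤ) (y : EuclideanSpace ℝ (Fin d)) :
    (inner ℝ (latticePt d ξ) y : ℝ) = ∑ i, (ξ i : ℝ) * y i := by
  rw [PiLp.inner_apply]
  simp [latticePt_apply]
  exact Finset.sum_congr rfl fun i _ => mul_comm _ _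

lemma heatKer_eq_prod (d : ℕ) {ε : ℝ} (hε : 0 < ε) (x : EuclideanSpace ℝ (Fin d)) :
    heatKer d ε x = ∏ i, (ε ^ (-(1:ℝ)/2) * rexp (-π * (x i) ^ 2 / ε)) := by
  unfold heatKer
  rw [Finset.prod_mul_distrib, Finset.prod_const, ← Real.exp_sum]
  congr 1
  · rw [← Real.rpow_natCast (ε ^ (-(1:ℝ)/2)) _, ← Real.rpow_mul hε.le]
    congr 1
    simp [Finset.card_univ]
    ring
  · rw [norm_sq_eq, Finset.mul_sum, Finset.sum_div]

lemma continuous_heatKer (d : ℕ) (ε : ℝ) : Continuous (heatKer d ε) := by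
  unfold heatKer
  fun_prop

end MainHelpers

open Complex Real in
/-- Poisson summation for the Gaussian smoothing of the indicator of a
full-dimensional polytope: both sums converge absolutely, and
`Σ_{m∈ℤ^d} (1_P ∗ G_ε)(m) = Σ_{ξ∈ℤ^d} 𝓕1_P(ξ) e^{−πε‖ξ‖²}`. -/
theorem poisson_summation_for_smoothed_indicator
    (d : ℕ) (P : Set (EuclideanSpace ℝ (Fin d)))
    (S : Finset (EuclideanSpace ℝ (Fin d)))
    (hP : P = convexHull ℝ (S : Set (EuclideanSpace ℝ (Fin d))))
    (hfull : (interior P).Nonempty)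
    (ε : ℝ) (hε : 0 < ε) :
    Summable (fun m : Fin d → ℤ => ∫ y in P, heatKer d ε (latticePt d m - y)) ∧
    Summable (fun ξ : Fin d → ℤ =>
      fourierInd d P (latticePt d ξ) *
        (Real.exp (-Real.pi * ε * ‖latticePt d ξ‖ ^ 2) : ℂ)) ∧
    ((∑' m : Fin d → ℤ, ∫ y in P, heatKer d ε (latticePt d m - y) : ℝ) : ℂ) =
      ∑' ξ : Fin d → ℤ,
        fourierInd d P (latticePt d ξ) *
          (Real.exp (-Real.pi * ε * ‖latticePt d ξ‖ ^ 2) : ℂ) := by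
  classical
  have hPc : IsCompact P := hP ▸ S.finite_toSet.isCompact_convexHull ℝ
  have hPvol : volume P < ⊤ := hPc.measure_lt_top
  set c : ℝ := ε ^ (-(1:ℝ)/2) with hc
  -- 1-d real Gaussian family
  set g : ℝ → ℤ → ℝ := fun t n => c * rexp (-π * ((n : ℝ) - t) ^ 2 / ε) with hgdef
  have hgnonneg : ∀ t n, 0 ≤ g t n := fun t n => by
    have : (0:ℝ) ≤ c := Real.rpow_nonneg hε.le _
    positivity
  have hgsum : ∀ t, Summable fun n => ‖g t n‖ := fun t =>
    ((summable_g hε t).congr fun n => rfl).abs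
  -- constants
  set C1 : ℝ := ∑' n : ℤ, rexp (-π * ε * (n:ℝ) ^ 2) with hC1
  have hθnonneg : ∀ t, 0 ≤ ∑' n, g t n := fun t => tsum_nonneg (hgnonneg t)
  have hθle : ∀ t, (∑' n, g t n) ≤ C1 := by
    intro t
    have h1 : ‖((∑' n, g t n : ℝ) : ℂ)‖ ≤ C1 := by
      rw [hgdef]
      rw [poisson_one_dim hε t]
      refine (norm_tsum_le_tsum_norm (summable_norm_cexp_term hε t)).trans_eq ?_
      exact tsum_congr (norm_cexp_term ε t)
    calc (∑' n, g t n) ≤ |∑' n, g t n| := le_abs_self _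
      _ = ‖((∑' n, g t n : ℝ) : ℂ)‖ := by rw [Complex.norm_real, Real.norm_eq_abs]
      _ ≤ C1 := h1
  -- heat kernel factorization
  have hker : ∀ (m : Fin d → ℤ) (y : EuclideanSpace ℝ (Fin d)),
      heatKer d ε (latticePt d m - y) = ∏ i, g (y i) (m i) := by
    intro m y
    rw [heatKer_eq_prod d hε]
    exact Finset.prod_congr rfl fun i _ => by rw [latticePt_sub_apply]
  have hknonneg : ∀ (m : Fin d → ℤ) (y : EuclideanSpace ℝ (Fin d)),
      0 ≤ heatKer d ε (latticePt d m - y) := fun m y => by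
    rw [hker]; exact Finset.prod_nonneg fun i _ => hgnonneg _ _
  -- summability of the real theta series
  have hsumG : ∀ y : EuclideanSpace ℝ (Fin d),
      Summable fun m : Fin d → ℤ => heatKer d ε (latticePt d m - y) := by
    intro y
    refine Summable.of_norm ?_
    refine (pi_summable_norm (fun i => g (y i)) (fun i => hgsum (y i))).congr fun m => ?_
    rw [hker m y]
  have hTheta : ∀ y : EuclideanSpace ℝ (Fin d),
      (∑' m : Fin d → ℤ, heatKer d ε (latticePt d m - y)) = ∏ i, ∑' n, g (y i) n := by
    intro y
    rw [tsum_congr (fun m => hker m y)]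
    exact pi_tsum (fun i => g (y i)) (fun i => hgsum (y i))
  have hThetaBound : ∀ y : EuclideanSpace ℝ (Fin d),
      (∑' m : Fin d → ℤ, heatKer d ε (latticePt d m - y)) ≤ C1 ^ d := by
    intro y
    rw [hTheta y]
    calc (∏ i, ∑' n, g (y i) n) ≤ ∏ _i : Fin d, C1 :=
          Finset.prod_le_prod (fun i _ => hθnonneg (y i)) (fun i _ => hθle (y i))
      _ = C1 ^ d := by rw [Finset.prod_const, Finset.card_univ, Fintype.card_fin]
  -- the complex Fourier-side term
  set F : (Fin d → ℤ) → EuclideanSpace ℝ (Fin d) → ℂ := fun ξ y =>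
    (Real.exp (-Real.pi * ε * ‖latticePt d ξ‖ ^ 2) : ℂ) *
      Complex.exp ((-2 * (Real.pi : ℂ) * Complex.I) * ((inner ℝ (latticePt d ξ) y : ℝ) : ℂ))
    with hFdef
  have hFnorm : ∀ ξ y, ‖F ξ y‖ = rexp (-π * ε * ‖latticePt d ξ‖ ^ 2) := by
    intro ξ y
    rw [hFdef]
    simp only [norm_mul, Complex.norm_real, Real.norm_eq_abs, abs_of_pos (Real.exp_pos _)]
    rw [Complex.norm_exp]
    have : ((-2 : ℂ) * (Real.pi : ℂ) * Complex.I * ((inner ℝ (latticePt d ξ) y : ℝ) : ℂ)).re = 0 := by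
      simp [Complex.mul_re, Complex.mul_im]
    rw [this, Real.exp_zero, mul_one]
  -- pointwise Poisson identity
  have hThetaC : ∀ y : EuclideanSpace ℝ (Fin d),
      ((∑' m : Fin d → ℤ, heatKer d ε (latticePt d m - y) : ℝ) : ℂ) =
        ∑' ξ : Fin d → ℤ, F ξ y := by
    intro y
    rw [hTheta y]
    rw [Complex.ofReal_prod]
    have step1 : ∀ i : Fin d, ((∑' n, g (y i) n : ℝ) : ℂ) =
        ∑' n : ℤ, cexp (-(π:ℂ) * ε * (n:ℂ) ^ 2 - 2 * π * Complex.I * n * (y i)) := by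
      intro i
      rw [hgdef]
      exact poisson_one_dim hε (y i)
    rw [Finset.prod_congr rfl fun i _ => step1 i]
    rw [← pi_tsum (fun i n => cexp (-(π:ℂ) * ε * (n:ℂ) ^ 2 - 2 * π * Complex.I * n * (y i)))
      (fun i => summable_norm_cexp_term hε (y i))]
    refine tsum_congr fun ξ => ?_
    rw [← Complex.exp_sum]
    show _ = ((rexp (-π * ε * ‖latticePt d ξ‖ ^ 2) : ℝ) : ℂ) *
      cexp ((-2 * (π : ℂ) * Complex.I) * ((inner ℝ (latticePt d ξ) y : ℝ) : ℂ))
    rw [Complex.ofReal_exp, ← Complex.exp_add]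
    congr 1
    rw [norm_sq_eq, inner_latticePt]
    push_cast [latticePt_apply]
    rw [Finset.mul_sum, Finset.mul_sum, ← Finset.sum_add_distrib]
    exact Finset.sum_congr rfl fun i _ => by ring
  -- summability of the Gaussian weights over the lattice
  have hC2sum : Summable fun ξ : Fin d → ℤ => rexp (-π * ε * ‖latticePt d ξ‖ ^ 2) := by
    have key : Summable fun ξ : Fin d → ℤ =>
        ‖∏ i, rexp (-π * ε * ((ξ i : ℝ)) ^ 2)‖ :=
      pi_summable_norm (fun _ n => rexp (-π * ε * (n:ℝ) ^ 2))
        (fun _ => ((summable_exp_sq hε).congr fun n => rfl).abs)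
    refine key.of_norm.congr fun ξ => ?_
    rw [← Real.exp_sum]
    congr 1
    rw [norm_sq_eq, Finset.mul_sum]
    exact Finset.sum_congr rfl fun i _ => by rw [latticePt_apply]
  -- measurability
  have hcont : ∀ m : Fin d → ℤ,
      Continuous fun y : EuclideanSpace ℝ (Fin d) => heatKer d ε (latticePt d m - y) :=
    fun m => (continuous_heatKer d ε).comp (continuous_const.sub continuous_id)
  have hFcont : ∀ ξ : Fin d → ℤ, Continuous (F ξ) := by
    intro ξ
    rw [hFdef]
    refine continuous_const.mul (Complex.continuous_exp.comp ?_)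
    refine Continuous.mul continuous_const (Complex.continuous_ofReal.comp ?_)
    exact continuous_const.inner continuous_id
  -- the key lintegral finiteness
  have key : (∑' m : Fin d → ℤ,
      ∫⁻ y in P, ENNReal.ofReal (heatKer d ε (latticePt d m - y))) ≠ ⊤ := by
    rw [← lintegral_tsum (fun m => ((hcont m).measurable.ennreal_ofReal).aemeasurable)]
    have hle : (∫⁻ y in P, ∑' m : Fin d → ℤ, ENNReal.ofReal (heatKer d ε (latticePt d m - y)))
        ≤ (ENNReal.ofReal (C1 ^ d)) * volume P := by
      have : ∀ y : EuclideanSpace ℝ (Fin d),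
          (∑' m : Fin d → ℤ, ENNReal.ofReal (heatKer d ε (latticePt d m - y)))
            ≤ ENNReal.ofReal (C1 ^ d) := by
        intro y
        rw [← ENNReal.ofReal_tsum_of_nonneg (fun m => hknonneg m y) (hsumG y)]
        exact ENNReal.ofReal_le_ofReal (hThetaBound y)
      calc _ ≤ ∫⁻ _y in P, ENNReal.ofReal (C1 ^ d) := lintegral_mono this
        _ = (ENNReal.ofReal (C1 ^ d)) * volume P := by
            rw [setLIntegral_const]
    exact ne_top_of_le_ne_top (ENNReal.mul_ne_top ENNReal.ofReal_ne_top hPvol.ne) hle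
  -- each integral equals toReal of the lintegral
  have hint_eq : ∀ m : Fin d → ℤ,
      (∫ y in P, heatKer d ε (latticePt d m - y)) =
        (∫⁻ y in P, ENNReal.ofReal (heatKer d ε (latticePt d m - y))).toReal := by
    intro m
    rw [integral_eq_lintegral_of_nonneg_ae]
    · exact ae_of_all _ fun y => hknonneg m y
    · exact (hcont m).aestronglyMeasurable
  -- Conjunct 1
  have conj1 : Summable (fun m : Fin d → ℤ => ∫ y in P, heatKer d ε (latticePt d m - y)) := by
    have := ENNReal.summable_toReal key
    exact this.congr fun m => (hint_eq m).symm
  -- step B: swap sum and integral on the spatial side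
  have stepB : (∫ y in P, ∑' m : Fin d → ℤ, heatKer d ε (latticePt d m - y)) =
      ∑' m : Fin d → ℤ, ∫ y in P, heatKer d ε (latticePt d m - y) := by
    refine integral_tsum (fun m => (hcont m).aestronglyMeasurable) ?_
    have he : ∀ m : Fin d → ℤ, (∫⁻ y in P, ‖heatKer d ε (latticePt d m - y)‖ₑ) =
        ∫⁻ y in P, ENNReal.ofReal (heatKer d ε (latticePt d m - y)) := fun m =>
      lintegral_congr fun y => Real.enorm_eq_ofReal (hknonneg m y)
    rw [tsum_congr he]
    exact key
  -- step C: swap sum and integral on the Fourier side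
  have hFlint : ∀ ξ : Fin d → ℤ, (∫⁻ y in P, ‖F ξ y‖ₑ) =
      ENNReal.ofReal (rexp (-π * ε * ‖latticePt d ξ‖ ^ 2)) * volume P := by
    intro ξ
    have he : ∀ y : EuclideanSpace ℝ (Fin d), (‖F ξ y‖ₑ) =
        ENNReal.ofReal (rexp (-π * ε * ‖latticePt d ξ‖ ^ 2)) := fun y => by
      rw [← hFnorm ξ y, ← Real.enorm_eq_ofReal (norm_nonneg _), enorm_norm]
    rw [lintegral_congr he, setLIntegral_const]
  have stepC : (∫ y in P, ∑' ξ : Fin d → ℤ, F ξ y) = ∑' ξ : Fin d → ℤ, ∫ y in P, F ξ y := by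
    refine integral_tsum (fun ξ => (hFcont ξ).aestronglyMeasurable) ?_
    rw [tsum_congr hFlint, ENNReal.tsum_mul_right,
      ← ENNReal.ofReal_tsum_of_nonneg (fun ξ => (Real.exp_pos _).le) hC2sum]
    exact ENNReal.mul_ne_top ENNReal.ofReal_ne_top hPvol.ne
  -- identify the Fourier-side integrals
  have hFint : ∀ ξ : Fin d → ℤ, (∫ y in P, F ξ y) =
      fourierInd d P (latticePt d ξ) *
        (Real.exp (-Real.pi * ε * ‖latticePt d ξ‖ ^ 2) : ℂ) := by
    intro ξ
    rw [hFdef]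
    rw [integral_const_mul]
    rw [mul_comm]
    rfl
  -- Conjunct 2
  have conj2 : Summable (fun ξ : Fin d → ℤ =>
      fourierInd d P (latticePt d ξ) *
        (Real.exp (-Real.pi * ε * ‖latticePt d ξ‖ ^ 2) : ℂ)) := by
    refine Summable.of_norm_bounded
      (g := fun ξ => (volume P).toReal * rexp (-π * ε * ‖latticePt d ξ‖ ^ 2))
      (hC2sum.mul_left _) fun ξ => ?_
    rw [norm_mul, Complex.norm_real, Real.norm_eq_abs, abs_of_pos (Real.exp_pos _)]
    refine mul_le_mul_of_nonneg_right ?_ (Real.exp_pos _).le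
    refine norm_setIntegral_le_of_norm_le_const hPvol (C := 1) (fun x _ => ?_) |>.trans ?_
    · rw [Complex.norm_exp]
      have : ((-2 : ℂ) * (Real.pi : ℂ) * Complex.I *
          ((inner ℝ (latticePt d ξ) x : ℝ) : ℂ)).re = 0 := by
        simp [Complex.mul_re, Complex.mul_im]
      rw [this, Real.exp_zero]
    · exact (one_mul _).le
  -- Conjunct 3
  refine ⟨conj1, conj2, ?_⟩
  calc ((∑' m : Fin d → ℤ, ∫ y in P, heatKer d ε (latticePt d m - y) : ℝ) : ℂ)
      = ((∫ y in P, ∑' m : Fin d → ℤ, heatKer d ε (latticePt d m - y) : ℝ) : ℂ) := by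
        rw [stepB]
    _ = ∫ y in P, ((∑' m : Fin d → ℤ, heatKer d ε (latticePt d m - y) : ℝ) : ℂ) :=
        integral_ofReal.symm
    _ = ∫ y in P, ∑' ξ : Fin d → ℤ, F ξ y :=
        integral_congr_ae (ae_of_all _ fun y => hThetaC y)
    _ = ∑' ξ : Fin d → ℤ, ∫ y in P, F ξ y := stepC
    _ = _ := tsum_congr hFint
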